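/- For real numbers q_1, q_2, q_3, the integral I(q) = ∫_{ℝ} dr / (cosh(r − q_1)·cosh(r − q_2)·cosh(r − q_3)) equals π / (2·∏_{1 ≤ j < k ≤ 3} cosh((q_j − q_k)/2)). -/

import Mathlib

open MeasureTheory

section Aux
open Real Filter Topology Set

private lemma integrable_exp_neg_abs' : Integrable (fun x : ℝ => exp (-|x|)) := by
  rw [← integrableOn_univ, ← Set.Iic_union_Ioi (a := (0:ℝ)), integrableOn_union]
  constructor
  · exact (integrableOn_exp_Iic 0).congr_fun
      (fun x hx => by rw [abs_of_nonpos hx, neg_neg]) measurableSet_Iic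
  · exact ((exp_neg_integrableOn_Ioi 0 one_pos)).congr_fun
      (fun x hx => by rw [abs_of_pos hx]; ring_nf) measurableSet_Ioi

private lemma sech_le (x : ℝ) : 1 / cosh x ≤ 2 * exp (-|x|) := by
  rw [div_le_iff₀ (cosh_pos x)]
  have h : exp |x| ≤ 2 * cosh x := by
    rw [cosh_eq]
    rcases abs_cases x with ⟨h, _⟩ | ⟨h, _⟩ <;> rw [h] <;>
      nlinarith [exp_pos x, exp_pos (-x)]
  calc (1:ℝ) = exp (-|x|) * exp |x| := by rw [← exp_add]; simp
    _ ≤ exp (-|x|) * (2 * cosh x) := by nlinarith [exp_pos (-|x|)]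
    _ = 2 * exp (-|x|) * cosh x := by ring

private lemma sech_le_one (x : ℝ) : 1 / cosh x ≤ 1 := by
  rw [div_le_one (cosh_pos x)]; exact one_le_cosh x

private lemma sech_le' (x c : ℝ) (h : |x| ≤ c) : ∀ r : ℝ,
    1 / cosh (r - x) ≤ 2 * exp c * exp (-|r|) := by
  intro r
  have h1 : 1 / cosh (r - x) ≤ 2 * exp (-|r - x|) := sech_le _
  have h2 : exp (-|r - x|) ≤ exp c * exp (-|r|) := by
    rw [← exp_add, exp_le_exp]
    have h := abs_sub_abs_le_abs_sub r x
    linarith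
  nlinarith [exp_pos (-|r - x|)]

private lemma integrable_sech (q : ℝ) : Integrable (fun r : ℝ => 1 / cosh (r - q)) := by
  have hb : Integrable (fun r : ℝ => 2 * exp |q| * exp (-|r|)) :=
    (integrable_exp_neg_abs'.const_mul _)
  have hm : AEStronglyMeasurable (fun r : ℝ => 1 / cosh (r - q)) volume :=
    (Continuous.div continuous_const ((Real.continuous_cosh).comp
      (continuous_id.sub continuous_const)) (fun x => (cosh_pos _).ne')).aestronglyMeasurable
  refine hb.mono hm (Filter.Eventually.of_forall fun r => ?_)
  have h1 := sech_le' q |q| le_rfl r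
  have h3 : (0:ℝ) < cosh (r - q) := cosh_pos _
  rw [norm_of_nonneg (by positivity), norm_of_nonneg (by positivity)]
  exact h1

private lemma tendsto_sinh_atTop' : Tendsto Real.sinh atTop atTop := by
  refine tendsto_atTop_mono' atTop ?_ tendsto_id
  filter_upwards [eventually_gt_atTop (0:ℝ)] with x hx
  exact (self_lt_sinh_iff.2 hx).le

private lemma tendsto_sinh_atBot' : Tendsto Real.sinh atBot atBot := by
  have h : (Real.sinh : ℝ → ℝ) = fun x => -sinh (-x) := by funext x; simp
  rw [h]
  exact tendsto_neg_atTop_atBot.comp (tendsto_sinh_atTop'.comp tendsto_neg_atBot_atTop)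

private lemma integral_sech (q : ℝ) : ∫ r : ℝ, 1 / cosh (r - q) = π := by
  have hd : ∀ x : ℝ, HasDerivAt (fun y => arctan (sinh (y - q))) (1 / cosh (x - q)) x := by
    intro x
    have h1 : HasDerivAt (fun y : ℝ => y - q) 1 x := (hasDerivAt_id x).sub_const q
    have h2 := (Real.hasDerivAt_sinh (x - q)).comp x h1
    have h3 := (Real.hasDerivAt_arctan (sinh (x - q))).comp x h2
    convert h3 using 1
    · rfl
    · rfl
    · rfl
    rw [show (1:ℝ) + sinh (x - q) ^ 2 = cosh (x - q) ^ 2 by rw [← Real.cosh_sq']]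
    have := (cosh_pos (x - q)).ne'
    field_simp
  have hbot : Tendsto (fun y : ℝ => arctan (sinh (y - q))) atBot (𝓝 (-(π/2))) := by
    have h0 : Tendsto (fun y : ℝ => y - q) atBot atBot :=
      tendsto_atBot_add_const_right _ (-q) tendsto_id
    exact (tendsto_arctan_atBot.comp (tendsto_sinh_atBot'.comp h0)).mono_right
      nhdsWithin_le_nhds
  have htop : Tendsto (fun y : ℝ => arctan (sinh (y - q))) atTop (𝓝 (π/2)) := by
    have h0 : Tendsto (fun y : ℝ => y - q) atTop atTop :=
      tendsto_atTop_add_const_right _ (-q) tendsto_id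
    exact (tendsto_arctan_atTop.comp (tendsto_sinh_atTop'.comp h0)).mono_right
      nhdsWithin_le_nhds
  rw [MeasureTheory.integral_of_hasDerivAt_of_tendsto hd (integrable_sech q) hbot htop]
  ring

private lemma partial_frac (q₁ q₂ q₃ r : ℝ) (h12 : q₁ ≠ q₂) (h13 : q₁ ≠ q₃) (h23 : q₂ ≠ q₃) :
    1 / (cosh (r - q₁) * cosh (r - q₂) * cosh (r - q₃))
      = (-1 / (sinh (q₁ - q₂) * sinh (q₁ - q₃))) * (1 / cosh (r - q₁))
      + (-1 / (sinh (q₂ - q₁) * sinh (q₂ - q₃))) * (1 / cosh (r - q₂))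
      + (-1 / (sinh (q₃ - q₁) * sinh (q₃ - q₂))) * (1 / cosh (r - q₃)) := by
  have s12 : sinh (q₁ - q₂) ≠ 0 := by simp [Real.sinh_eq_zero, sub_eq_zero, h12]
  have s13 : sinh (q₁ - q₃) ≠ 0 := by simp [Real.sinh_eq_zero, sub_eq_zero, h13]
  have s23 : sinh (q₂ - q₃) ≠ 0 := by simp [Real.sinh_eq_zero, sub_eq_zero, h23]
  have s21 : sinh (q₂ - q₁) ≠ 0 := by simp [Real.sinh_eq_zero, sub_eq_zero, h12.symm]
  have s31 : sinh (q₃ - q₁) ≠ 0 := by simp [Real.sinh_eq_zero, sub_eq_zero, h13.symm]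
  have s32 : sinh (q₃ - q₂) ≠ 0 := by simp [Real.sinh_eq_zero, sub_eq_zero, h23.symm]
  have c1 := (cosh_pos (r - q₁)).ne'
  have c2 := (cosh_pos (r - q₂)).ne'
  have c3 := (cosh_pos (r - q₃)).ne'
  field_simp
  rw [Real.sinh_eq, Real.sinh_eq, Real.sinh_eq, Real.sinh_eq, Real.sinh_eq, Real.sinh_eq,
    Real.cosh_eq, Real.cosh_eq, Real.cosh_eq]
  simp only [Real.exp_sub, Real.exp_neg]
  have e1 := Real.exp_ne_zero r
  have e2 := Real.exp_ne_zero q₁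
  have e3 := Real.exp_ne_zero q₂
  have e4 := Real.exp_ne_zero q₃
  field_simp
  ring

private lemma coeff_sum (q₁ q₂ q₃ : ℝ) (h12 : q₁ ≠ q₂) (h13 : q₁ ≠ q₃) (h23 : q₂ ≠ q₃) :
    (-1 / (sinh (q₁ - q₂) * sinh (q₁ - q₃)))
      + (-1 / (sinh (q₂ - q₁) * sinh (q₂ - q₃)))
      + (-1 / (sinh (q₃ - q₁) * sinh (q₃ - q₂)))
      = 1 / (2 * (cosh ((q₁ - q₂) / 2) * cosh ((q₁ - q₃) / 2) * cosh ((q₂ - q₃) / 2))) := by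
  have s12 : sinh (q₁ - q₂) ≠ 0 := by simp [Real.sinh_eq_zero, sub_eq_zero, h12]
  have s13 : sinh (q₁ - q₃) ≠ 0 := by simp [Real.sinh_eq_zero, sub_eq_zero, h13]
  have s23 : sinh (q₂ - q₃) ≠ 0 := by simp [Real.sinh_eq_zero, sub_eq_zero, h23]
  have s21 : sinh (q₂ - q₁) ≠ 0 := by simp [Real.sinh_eq_zero, sub_eq_zero, h12.symm]
  have s31 : sinh (q₃ - q₁) ≠ 0 := by simp [Real.sinh_eq_zero, sub_eq_zero, h13.symm]
  have s32 : sinh (q₃ - q₂) ≠ 0 := by simp [Real.sinh_eq_zero, sub_eq_zero, h23.symm]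
  have c12 := (cosh_pos ((q₁ - q₂)/2)).ne'
  have c13 := (cosh_pos ((q₁ - q₃)/2)).ne'
  have c23 := (cosh_pos ((q₂ - q₃)/2)).ne'
  field_simp
  have hs : ∀ x : ℝ, sinh x = 2 * sinh (x/2) * cosh (x/2) := by
    intro x
    rw [show x = 2 * (x/2) by ring, Real.sinh_two_mul]
    ring_nf
  rw [hs (q₁ - q₂), hs (q₁ - q₃), hs (q₂ - q₃), hs (q₂ - q₁), hs (q₃ - q₁), hs (q₃ - q₂)]
  rw [show (q₁ - q₂)/2 = q₁/2 - q₂/2 by ring, show (q₁ - q₃)/2 = q₁/2 - q₃/2 by ring,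
    show (q₂ - q₃)/2 = q₂/2 - q₃/2 by ring, show (q₂ - q₁)/2 = q₂/2 - q₁/2 by ring,
    show (q₃ - q₁)/2 = q₃/2 - q₁/2 by ring, show (q₃ - q₂)/2 = q₃/2 - q₂/2 by ring]
  simp only [Real.sinh_eq, Real.cosh_eq, Real.exp_sub, Real.exp_neg]
  have e2 := Real.exp_ne_zero (q₁/2)
  have e3 := Real.exp_ne_zero (q₂/2)
  have e4 := Real.exp_ne_zero (q₃/2)
  field_simp
  ring

private lemma distinct_case (q₁ q₂ q₃ : ℝ) (h12 : q₁ ≠ q₂) (h13 : q₁ ≠ q₃) (h23 : q₂ ≠ q₃) :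
    ∫ r : ℝ, 1 / (cosh (r - q₁) * cosh (r - q₂) * cosh (r - q₃))
      = π / (2 * (cosh ((q₁ - q₂) / 2) * cosh ((q₁ - q₃) / 2) * cosh ((q₂ - q₃) / 2))) := by
  have hfun : (fun r : ℝ => 1 / (cosh (r - q₁) * cosh (r - q₂) * cosh (r - q₃)))
      = fun r : ℝ => (-1 / (sinh (q₁ - q₂) * sinh (q₁ - q₃))) * (1 / cosh (r - q₁))
        + (-1 / (sinh (q₂ - q₁) * sinh (q₂ - q₃))) * (1 / cosh (r - q₂))
        + (-1 / (sinh (q₃ - q₁) * sinh (q₃ - q₂))) * (1 / cosh (r - q₃)) :=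
    funext fun r => partial_frac q₁ q₂ q₃ r h12 h13 h23
  rw [hfun]
  have i1 := (integrable_sech q₁).const_mul (-1 / (sinh (q₁ - q₂) * sinh (q₁ - q₃)))
  have i2 := (integrable_sech q₂).const_mul (-1 / (sinh (q₂ - q₁) * sinh (q₂ - q₃)))
  have i3 := (integrable_sech q₃).const_mul (-1 / (sinh (q₃ - q₁) * sinh (q₃ - q₂)))
  have i12 : Integrable (fun x : ℝ => -1 / (sinh (q₁ - q₂) * sinh (q₁ - q₃)) * (1 / cosh (x - q₁))
      + -1 / (sinh (q₂ - q₁) * sinh (q₂ - q₃)) * (1 / cosh (x - q₂))) volume := i1.add i2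
  rw [integral_add i12 i3]
  rw [integral_add i1 i2, integral_const_mul,
    integral_const_mul, integral_const_mul, integral_sech, integral_sech, integral_sech]
  have key := coeff_sum q₁ q₂ q₃ h12 h13 h23
  have c12 := (cosh_pos ((q₁ - q₂)/2)).ne'
  have c13 := (cosh_pos ((q₁ - q₃)/2)).ne'
  have c23 := (cosh_pos ((q₂ - q₃)/2)).ne'
  calc _ = ((-1 / (sinh (q₁ - q₂) * sinh (q₁ - q₃)))
        + (-1 / (sinh (q₂ - q₁) * sinh (q₂ - q₃)))
        + (-1 / (sinh (q₃ - q₁) * sinh (q₃ - q₂)))) * π := by ring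
    _ = (1 / (2 * (cosh ((q₁ - q₂) / 2) * cosh ((q₁ - q₃) / 2) * cosh ((q₂ - q₃) / 2)))) * π := by
        rw [key]
    _ = _ := by field_simp

private lemma contL : Continuous fun p : ℝ × ℝ × ℝ =>
    ∫ r : ℝ, 1 / (cosh (r - p.1) * cosh (r - p.2.1) * cosh (r - p.2.2)) := by
  rw [continuous_iff_continuousAt]
  intro p
  apply continuousAt_of_dominated (bound := fun r : ℝ => 2 * exp (|p.1| + 1) * exp (-|r|))
  · refine Filter.Eventually.of_forall fun x => ?_
    exact (Continuous.div continuous_const (by fun_prop) fun r => by positivity).aestronglyMeasurable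
  · filter_upwards [Metric.ball_mem_nhds p one_pos] with x hx
    refine Filter.Eventually.of_forall fun r => ?_
    have hx1 : |x.1| ≤ |p.1| + 1 := by
      have h1 : dist x.1 p.1 ≤ dist x p := by
        rw [Prod.dist_eq]; exact le_max_left _ _
      have h2 : dist x p < 1 := Metric.mem_ball.1 hx
      have h3 : |x.1 - p.1| < 1 := by rw [← Real.dist_eq]; linarith
      have := abs_sub_abs_le_abs_sub x.1 p.1
      linarith
    have hA : 1 / cosh (r - x.1) ≤ 2 * exp (|p.1| + 1) * exp (-|r|) := sech_le' x.1 _ hx1 r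
    have hB := sech_le_one (r - x.2.1)
    have hC := sech_le_one (r - x.2.2)
    have pA := cosh_pos (r - x.1)
    have pB := cosh_pos (r - x.2.1)
    have pC := cosh_pos (r - x.2.2)
    rw [norm_of_nonneg (by positivity)]
    calc 1 / (cosh (r - x.1) * cosh (r - x.2.1) * cosh (r - x.2.2))
        = (1 / cosh (r - x.1)) * (1 / cosh (r - x.2.1)) * (1 / cosh (r - x.2.2)) := by
          field_simp
      _ ≤ (1 / cosh (r - x.1)) * 1 * 1 := by
          have h0 : 0 ≤ 1 / cosh (r - x.1) := by positivity
          have h0' : 0 ≤ 1 / cosh (r - x.2.1) := by positivity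
          have h0'' : 0 ≤ 1 / cosh (r - x.2.2) := by positivity
          exact mul_le_mul (mul_le_mul le_rfl hB h0' h0) hC h0'' (by positivity)
      _ = 1 / cosh (r - x.1) := by ring
      _ ≤ _ := hA
  · exact (integrable_exp_neg_abs'.const_mul _)
  · refine Filter.Eventually.of_forall fun r => ?_
    exact (Continuous.div continuous_const (by fun_prop) fun x => by positivity).continuousAt

private lemma contR : Continuous fun p : ℝ × ℝ × ℝ =>
    π / (2 * (cosh ((p.1 - p.2.1) / 2) * cosh ((p.1 - p.2.2) / 2) * cosh ((p.2.1 - p.2.2) / 2))) :=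
  Continuous.div continuous_const (by fun_prop) fun p => by positivity

private lemma dense_distinct :
    Dense {p : ℝ × ℝ × ℝ | p.1 ≠ p.2.1 ∧ p.1 ≠ p.2.2 ∧ p.2.1 ≠ p.2.2} := by
  rw [Metric.dense_iff]
  rintro ⟨a, b, c⟩ ε hε
  have hne : (Set.Ioo (0:ℝ) (ε/3) \ {a - b, (a - c)/2, b - c}).Nonempty := by
    refine Set.Infinite.nonempty ((Set.Ioo_infinite (by linarith)).diff ?_)
    exact (Set.finite_singleton _).insert _ |>.insert _
  obtain ⟨t, ht, hmem⟩ := hne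
  simp only [Set.mem_insert_iff, Set.mem_singleton_iff, not_or] at hmem
  obtain ⟨hv1, hv2, hv3⟩ := hmem
  refine ⟨(a, b + t, c + 2*t), Metric.mem_ball.2 ?_, ?_, ?_, ?_⟩
  · rw [Prod.dist_eq, Prod.dist_eq]
    simp only [Real.dist_eq]
    obtain ⟨ht0, ht3⟩ := ht
    rw [show a - a = 0 by ring, show b + t - b = t by ring, show c + 2*t - c = 2*t by ring]
    simp only [abs_zero, abs_of_pos ht0, abs_of_pos (by linarith : (0:ℝ) < 2*t)]
    refine max_lt (by linarith) (max_lt (by linarith) (by linarith))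
  · dsimp only; intro h; exact hv1 (by linarith)
  · dsimp only; intro h; exact hv2 (by linarith)
  · dsimp only; intro h; exact hv3 (by linarith)

end Aux

/-- `∫ dr / (cosh(r−q₁)cosh(r−q₂)cosh(r−q₃)) = π / (2 ∏_{j<k} cosh((q_j−q_k)/2))`. -/
theorem integral_inv_cosh_three (q₁ q₂ q₃ : ℝ) :
    ∫ r : ℝ, 1 / (Real.cosh (r - q₁) * Real.cosh (r - q₂) * Real.cosh (r - q₃))
      = Real.pi / (2 * (Real.cosh ((q₁ - q₂) / 2) * Real.cosh ((q₁ - q₃) / 2) *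
          Real.cosh ((q₂ - q₃) / 2))) := by
  have key : (fun p : ℝ × ℝ × ℝ =>
      ∫ r : ℝ, 1 / (Real.cosh (r - p.1) * Real.cosh (r - p.2.1) * Real.cosh (r - p.2.2)))
      = fun p : ℝ × ℝ × ℝ => Real.pi / (2 * (Real.cosh ((p.1 - p.2.1) / 2) *
          Real.cosh ((p.1 - p.2.2) / 2) * Real.cosh ((p.2.1 - p.2.2) / 2))) := by
    refine Continuous.ext_on dense_distinct contL contR ?_
    rintro ⟨a, b, c⟩ ⟨h1, h2, h3⟩
    exact distinct_case a b c h1 h2 h3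
  exact congrFun key (q₁, q₂, q₃)
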